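/- L(/→)-grammars with types restricted to degree at most 1 recognise exactly the ε-free regular languages. -/

import Mathlib

/-- slash-only types over primitives `P`. `div β α` denotes `β/α`. -/
inductive Tp (P : Type) : Type
  | pr : P → Tp P
  | div : Tp P → Tp P → Tp P

open Tp

/-- The calculus L(/→) with Cut: Axiom, rule (/→), Cut. -/
inductive Der {P : Type} : List (Tp P) → Tp P → Prop
  | ax (α : Tp P) : Der [α] α
  | slash {Γ Δ Θ : List (Tp P)} {α β γ : Tp P} :
      Der Γ α → Der (Δ ++ β :: Θ) γ → Der (Δ ++ div β α :: (Γ ++ Θ)) γ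
  | cut {Γ Θ Δ : List (Tp P)} {α β : Tp P} :
      Der (Γ ++ α :: Θ) β → Der Δ α → Der (Γ ++ (Δ ++ Θ)) β

/-- Cut-free L(/→): only Axiom and (/→). -/
inductive DerCF {P : Type} : List (Tp P) → Tp P → Prop
  | ax (α : Tp P) : DerCF [α] α
  | slash {Γ Δ Θ : List (Tp P)} {α β γ : Tp P} :
      DerCF Γ α → DerCF (Δ ++ β :: Θ) γ → DerCF (Δ ++ div β α :: (Γ ++ Θ)) γ

/-- `mk δ [β₁, ..., βₙ] = (⋯((δ/βₙ)/βₙ₋₁)/⋯)/β₁`. -/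
def mk {P : Type} (δ : Tp P) : List (Tp P) → Tp P
  | [] => δ
  | b :: bs => div (mk δ bs) b

/-- Degree: number of occurrences of `/`. -/
def deg {P : Type} : Tp P → ℕ
  | pr _ => 0
  | div a b => deg a + deg b + 1

/-- A Lambek grammar over slash-only types: primitive types `P`, alphabet `V`,
distinguished primitive type `S`, finite type assignment `f`. -/
structure LGrammar (P V : Type) where
  S : P
  f : V → Set (Tp P)
  fin : ∀ a : V, (f a).Finite

/-- The language recognised by a Lambek grammar. -/
def LGrammar.Lang {P V : Type} (G : LGrammar P V) : Set (List V) :=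
  {w | ∃ Γ : List (Tp P), List.Forall₂ (fun a α => α ∈ G.f a) w Γ ∧ Der Γ (pr G.S)}

/-- A right-regular grammar: productions `A → aB` (`rule`) and `A → a` (`term`). -/
structure RegGrammar (N T : Type) where
  S : N
  rule : N → T → N → Prop
  term : N → T → Prop

/-- Generation relation of a right-regular grammar. -/
inductive RegGen {N T : Type} (G : RegGrammar N T) : N → List T → Prop
  | term {A : N} {a : T} : G.term A a → RegGen G A [a]
  | step {A B : N} {a : T} {w : List T} : G.rule A a B → RegGen G B w → RegGen G A (a :: w)

/-- The language generated by a right-regular grammar. -/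
def RegGrammar.Lang {N T : Type} (G : RegGrammar N T) : Set (List T) :=
  {w | RegGen G G.S w}

namespace Aux

lemma f2_right_mem {α β : Type} {R : α → β → Prop} {l : List α} {u : List β}
    (h : List.Forall₂ R l u) {b : β} (hb : b ∈ u) : ∃ a ∈ l, R a b := by
  induction h with
  | nil => cases hb
  | cons hab h ih =>
    rcases List.mem_cons.1 hb with rfl | hb
    · exact ⟨_, List.mem_cons_self .., hab⟩
    · obtain ⟨a, ha, hr⟩ := ih hb
      exact ⟨a, List.mem_cons_of_mem _ ha, hr⟩


lemma f2_split {α β : Type} {R : α → β → Prop} :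
    ∀ {l₁ l₂ : List α} {u : List β}, List.Forall₂ R (l₁ ++ l₂) u →
      ∃ u₁ u₂, u = u₁ ++ u₂ ∧ List.Forall₂ R l₁ u₁ ∧ List.Forall₂ R l₂ u₂ := by
  intro l₁
  induction l₁ with
  | nil => intro l₂ u h; exact ⟨[], u, rfl, List.Forall₂.nil, h⟩
  | cons a l ih =>
    intro l₂ u h
    rw [List.cons_append, List.forall₂_cons_left_iff] at h
    obtain ⟨b, u', hab, h', rfl⟩ := h
    obtain ⟨u₁, u₂, rfl, h₁, h₂⟩ := ih h'
    exact ⟨b :: u₁, u₂, rfl, List.Forall₂.cons hab h₁, h₂⟩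

lemma f2_app {α β : Type} {R : α → β → Prop} :
    ∀ {l₁ l₂ : List α} {u₁ u₂ : List β}, List.Forall₂ R l₁ u₁ → List.Forall₂ R l₂ u₂ →
      List.Forall₂ R (l₁ ++ l₂) (u₁ ++ u₂) := by
  intro l₁ l₂ u₁ u₂ h₁ h₂
  induction h₁ with
  | nil => exact h₂
  | cons h _ ih => exact List.Forall₂.cons h ih

lemma flatten_map_singleton {α : Type} : ∀ l : List α, (l.map fun a => [a]).flatten = l
  | [] => rfl
  | a :: l => by simp [flatten_map_singleton l]

variable {P X : Type}

def eval (v : P → Set (List X)) : Tp P → Set (List X)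
  | pr A => v A
  | div β α => {x | ∀ y ∈ eval v α, x ++ y ∈ eval v β}

theorem sound (v : P → Set (List X)) {Γ : List (Tp P)} {γ : Tp P} (h : Der Γ γ) :
    ∀ xs : List (List X), List.Forall₂ (fun τ x => x ∈ eval v τ) Γ xs →
      xs.flatten ∈ eval v γ := by
  induction h with
  | ax α =>
    intro xs h
    rw [List.forall₂_cons_left_iff] at h
    obtain ⟨x, u, hx, hn, rfl⟩ := h
    rw [List.forall₂_nil_left_iff] at hn
    subst hn; simpa using hx
  | slash h1 h2 ih1 ih2 =>
    intro xs h
    obtain ⟨xΔ, rest, rfl, hΔ, hrest⟩ := f2_split h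
    rw [List.forall₂_cons_left_iff] at hrest
    obtain ⟨u, rest', hu, hrest', rfl⟩ := hrest
    obtain ⟨xΓ, xΘ, rfl, hΓ, hΘ⟩ := f2_split hrest'
    have hβ : u ++ xΓ.flatten ∈ eval v _ := hu _ (ih1 xΓ hΓ)
    have := ih2 (xΔ ++ (u ++ xΓ.flatten) :: xΘ)
      (f2_app hΔ (List.Forall₂.cons hβ hΘ))
    simpa [List.flatten_append, List.append_assoc] using this
  | cut h1 h2 ih1 ih2 =>
    intro xs h
    obtain ⟨xΓ, rest, rfl, hΓ, hrest⟩ := f2_split h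
    obtain ⟨xΔ, xΘ, rfl, hΔ, hΘ⟩ := f2_split hrest
    have hα := ih2 xΔ hΔ
    have := ih1 (xΓ ++ xΔ.flatten :: xΘ)
      (f2_app hΓ (List.Forall₂.cons hα hΘ))
    simpa [List.flatten_append, List.append_assoc] using this

inductive Chain : P → List (Tp P) → Prop
  | single (A : P) : Chain A [pr A]
  | cons {A B : P} {Γ : List (Tp P)} : Chain B Γ → Chain A (div (pr A) (pr B) :: Γ)

lemma deg0 {τ : Tp P} (h : deg τ = 0) : ∃ A, τ = pr A := by
  cases τ with
  | pr A => exact ⟨A, rfl⟩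
  | div a b => simp [deg] at h

lemma mem_eval_chain {τ : Tp P} (h : deg τ ≤ 1) :
    [τ] ∈ eval (fun A => {Γ | Chain A Γ}) τ := by
  cases τ with
  | pr A => exact Chain.single A
  | div β α =>
    simp only [deg] at h
    obtain ⟨A, rfl⟩ := deg0 (by omega : deg β = 0)
    obtain ⟨B, rfl⟩ := deg0 (by omega : deg α = 0)
    intro y hy
    exact Chain.cons hy

theorem der_chain {Γ : List (Tp P)} {S : P} (h : Der Γ (pr S))
    (hd : ∀ τ ∈ Γ, deg τ ≤ 1) : Chain S Γ := by
  have := sound (fun A => {Γ | Chain A Γ}) h (Γ.map (fun τ => [τ]))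
    (by
      rw [List.forall₂_map_right_iff]
      exact List.forall₂_same.2 fun τ hτ => mem_eval_chain (hd τ hτ))
  simpa [flatten_map_singleton, eval] using this

theorem chain_der {Γ : List (Tp P)} {A : P} (h : Chain A Γ) : Der Γ (pr A) := by
  induction h with
  | single A => exact Der.ax _
  | @cons A B Γ h ih =>
    have := Der.slash ih (Der.ax (pr A)) (Δ := []) (Θ := [])
    simpa using this



lemma regGen_of_chain {N V : Type} (G' : RegGrammar N V) (g : V → Set (Tp N))
    (hterm : ∀ a A, pr A ∈ g a → G'.term A a)
    (hrule : ∀ a A B, div (pr A) (pr B) ∈ g a → G'.rule A a B)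
    {A : N} {Γ : List (Tp N)} (hc : Chain A Γ) :
    ∀ {w : List V}, List.Forall₂ (fun a α => α ∈ g a) w Γ → RegGen G' A w := by
  induction hc with
  | single A =>
    intro w h
    rw [List.forall₂_cons_right_iff] at h
    obtain ⟨a, w', ha, hn, rfl⟩ := h
    rw [List.forall₂_nil_right_iff] at hn
    subst hn
    exact RegGen.term (hterm a A ha)
  | @cons A B Γ hc ih =>
    intro w h
    rw [List.forall₂_cons_right_iff] at h
    obtain ⟨a, w', ha, h', rfl⟩ := h
    exact RegGen.step (hrule a A B ha) (ih h')

lemma chain_of_regGen {N V : Type} (G' : RegGrammar N V) (g : V → Set (Tp N))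
    (hterm : ∀ a A, G'.term A a → pr A ∈ g a)
    (hrule : ∀ a A B, G'.rule A a B → div (pr A) (pr B) ∈ g a)
    {A : N} {w : List V} (h : RegGen G' A w) :
    ∃ Γ, List.Forall₂ (fun a α => α ∈ g a) w Γ ∧ Chain A Γ := by
  induction h with
  | @term A a h =>
    exact ⟨[pr A], List.Forall₂.cons (hterm a A h) List.Forall₂.nil, Chain.single A⟩
  | @step A B a w h _ ih =>
    obtain ⟨Γ, hf, hc⟩ := ih
    exact ⟨div (pr A) (pr B) :: Γ, List.Forall₂.cons (hrule a A B h) hf, Chain.cons hc⟩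

end Aux

open Aux in
theorem degree_one_lambek_eq_regular {V : Type} [Finite V] (L : Set (List V)) :
    (∃ (P : Type) (_ : Finite P) (G : LGrammar P V),
        (∀ a : V, ∀ α ∈ G.f a, deg α ≤ 1) ∧ G.Lang = L) ↔
    (∃ (N : Type) (_ : Finite N) (G' : RegGrammar N V), G'.Lang = L) := by
  constructor
  · rintro ⟨P, hP, G, hdeg, rfl⟩
    refine ⟨P, hP, ⟨G.S, fun A a B => div (pr A) (pr B) ∈ G.f a,
        fun A a => pr A ∈ G.f a⟩, ?_⟩
    ext w
    simp only [RegGrammar.Lang, LGrammar.Lang, Set.mem_setOf_eq]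
    constructor
    · intro h
      obtain ⟨Γ, hf, hc⟩ := chain_of_regGen _ G.f (fun _ _ h => h) (fun _ _ _ h => h) h
      exact ⟨Γ, hf, chain_der hc⟩
    · rintro ⟨Γ, hf, hd⟩
      have hdΓ : ∀ τ ∈ Γ, deg τ ≤ 1 := by
        intro τ hτ
        obtain ⟨a, -, ha⟩ := f2_right_mem hf hτ
        exact hdeg a τ ha
      exact regGen_of_chain _ G.f (fun _ _ h => h) (fun _ _ _ h => h)
        (der_chain hd hdΓ) hf
  · rintro ⟨N, hN, G', rfl⟩
    refine ⟨N, hN, ⟨G'.S,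
        fun a => {τ | (∃ A, G'.term A a ∧ τ = pr A) ∨
                      ∃ A B, G'.rule A a B ∧ τ = div (pr A) (pr B)}, ?_⟩, ?_, ?_⟩
    · intro a
      apply Set.Finite.subset (Set.finite_range
        (fun x : N ⊕ N × N => Sum.elim (fun A => pr A)
          (fun p => div (pr p.1) (pr p.2)) x))
      rintro τ (⟨A, _, rfl⟩ | ⟨A, B, _, rfl⟩)
      · exact ⟨Sum.inl A, rfl⟩
      · exact ⟨Sum.inr (A, B), rfl⟩
    · rintro a τ (⟨A, _, rfl⟩ | ⟨A, B, _, rfl⟩) <;> simp [deg]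
    · ext w
      simp only [RegGrammar.Lang, LGrammar.Lang, Set.mem_setOf_eq]
      constructor
      · rintro ⟨Γ, hf, hd⟩
        have hdΓ : ∀ τ ∈ Γ, deg τ ≤ 1 := by
          intro τ hτ
          obtain ⟨a, -, (⟨A, _, rfl⟩ | ⟨A, B, _, rfl⟩)⟩ := f2_right_mem hf hτ
          · simp [deg]
          · simp [deg]
        refine regGen_of_chain _ _ ?_ ?_ (der_chain hd hdΓ) hf
        · rintro a A (⟨A', h, hA⟩ | ⟨A', B', _, hA⟩)
          · cases hA; exact h
          · cases hA
        · rintro a A B (⟨A', _, hA⟩ | ⟨A', B', h, hA⟩)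
          · cases hA
          · cases hA; exact h
      · intro h
        obtain ⟨Γ, hf, hc⟩ := chain_of_regGen G'
          (fun a => {τ | (∃ A, G'.term A a ∧ τ = pr A) ∨
                      ∃ A B, G'.rule A a B ∧ τ = div (pr A) (pr B)})
          (fun a A h => Or.inl ⟨A, h, rfl⟩)
          (fun a A B h => Or.inr ⟨A, B, h, rfl⟩) h
        exact ⟨Γ, hf, chain_der hc⟩
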